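/- Let g¹, g² ∈ {2,…,T} ∪ {∞} with g := min(g¹,g²) finite, and let t with g ≤ t ≤ T. Assume P(W=1) > 0, P(G¹=g¹,G²=g²) > 0, P(D_t=0, G¹≠g¹, G²≠g²) > 0, p(X) < 1 and p^CS(X) < 1 almost surely, E[w] > 0 and E_{P_W}[w^CS] > 0. Then the doubly-robust two-event moment equals the combined-event doubly-robust moment under P_W: E[(1{G¹=g¹,G²=g²}/E[1{G¹=g¹,G²=g²}] − w/E[w])·(Y_t − Y_{g−1} − m(X))] = E_{P_W}[(1{G=g}/E_{P_W}[1{G=g}] − w^CS/E_{P_W}[w^CS])·(Y_t − Y_{g−1} − m^CS(X))]. -/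

import Mathlib

/- Two-event staggered Difference-in-Differences setup (Callaway–Sant'Anna with a
confounding event).  Cohorts take values in `{2,…,T} ∪ {∞} ⊆ ℕ∞`; the potential-outcome
index `0 : ℕ∞` codes "never treated by that event". -/

open MeasureTheory ProbabilityTheory

noncomputable section

namespace TwoEventDiD

variable {Ω : Type*} [MeasurableSpace Ω]

/-- Expectation of `Z` conditional on the event `A`: `E[Z | A]`. -/
def cE (μ : Measure Ω) (A : Set Ω) (Z : Ω → ℝ) : ℝ := ∫ ω, Z ω ∂(μ[|A])

/-- Probability of `B` conditional on the event `A`: `P(B | A)`. -/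
def cP (μ : Measure Ω) (A B : Set Ω) : ℝ := (μ[|A] B).toReal

/-- `g` lies in `{2,…,T} ∪ {∞}`. -/
def InCohort (T : ℕ) (g : ℕ∞) : Prop := g = ⊤ ∨ ((2 : ℕ∞) ≤ g ∧ g ≤ (T : ℕ∞))

/-- Realized outcome `Y_t := Y_t(G¹,G²)`. -/
def Yr (G1 G2 : Ω → ℕ∞) (Y : ℕ → ℕ∞ → ℕ∞ → Ω → ℝ) (t : ℕ) : Ω → ℝ :=
  fun ω => Y t (G1 ω) (G2 ω) ω

/-- Double-group-time average treatment effect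
`ATT(g¹,g²,t) = E[Y_t(g¹,g²) − Y_t(0,0) | G¹=g¹, G²=g²]`. -/
def ATT (μ : Measure Ω) (G1 G2 : Ω → ℕ∞) (Y : ℕ → ℕ∞ → ℕ∞ → Ω → ℝ)
    (g1 g2 : ℕ∞) (t : ℕ) : ℝ :=
  cE μ {ω | G1 ω = g1 ∧ G2 ω = g2} fun ω => Y t g1 g2 ω - Y t 0 0 ω

/-- Target (event-1) treatment effect
`ATT¹(g¹,g²,t) = E[Y_t(g¹,0) − Y_t(0,0) | G¹=g¹, G²=g²]`. -/
def ATT1 (μ : Measure Ω) (G1 G2 : Ω → ℕ∞) (Y : ℕ → ℕ∞ → ℕ∞ → Ω → ℝ)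
    (g1 g2 : ℕ∞) (t : ℕ) : ℝ :=
  cE μ {ω | G1 ω = g1 ∧ G2 ω = g2} fun ω => Y t g1 0 ω - Y t 0 0 ω

/-- Confounding (event-2) treatment effect
`ATT²(g¹,g²,t) = E[Y_t(0,g²) − Y_t(0,0) | G¹=g¹, G²=g²]`. -/
def ATT2 (μ : Measure Ω) (G1 G2 : Ω → ℕ∞) (Y : ℕ → ℕ∞ → ℕ∞ → Ω → ℝ)
    (g1 g2 : ℕ∞) (t : ℕ) : ℝ :=
  cE μ {ω | G1 ω = g1 ∧ G2 ω = g2} fun ω => Y t 0 g2 ω - Y t 0 0 ω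

/-- No Anticipation (unconditional version): before `max(g¹,g²)` the mean outcome of
cohort `(g¹,g²)` coincides with the appropriate less-treated potential outcome. -/
def NoAnticipation (μ : Measure Ω) (G1 G2 : Ω → ℕ∞) (Y : ℕ → ℕ∞ → ℕ∞ → Ω → ℝ)
    (T : ℕ) : Prop :=
  ∀ g1 g2 : ℕ∞, InCohort T g1 → InCohort T g2 →
    0 < μ {ω | G1 ω = g1 ∧ G2 ω = g2} →
    ∀ t : ℕ, 1 ≤ t → (t : ℕ∞) < max g1 g2 →
      ((t : ℕ∞) < min g1 g2 →
        cE μ {ω | G1 ω = g1 ∧ G2 ω = g2} (Y t g1 g2)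
          = cE μ {ω | G1 ω = g1 ∧ G2 ω = g2} (Y t 0 0)) ∧
      (g1 ≤ (t : ℕ∞) ∧ (t : ℕ∞) < g2 →
        cE μ {ω | G1 ω = g1 ∧ G2 ω = g2} (Y t g1 g2)
          = cE μ {ω | G1 ω = g1 ∧ G2 ω = g2} (Y t g1 0)) ∧
      (g2 ≤ (t : ℕ∞) ∧ (t : ℕ∞) < g1 →
        cE μ {ω | G1 ω = g1 ∧ G2 ω = g2} (Y t g1 g2)
          = cE μ {ω | G1 ω = g1 ∧ G2 ω = g2} (Y t 0 g2))


/-- The σ-algebra `σ(X)` generated by the covariates. -/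
def mX {K : ℕ} (X : Ω → Fin K → ℝ) : MeasurableSpace Ω :=
  MeasurableSpace.comap X inferInstance

/-- Conditional No Anticipation (conditional on covariates `X`). -/
def CondNoAnticipation (μ : Measure Ω) (G1 G2 : Ω → ℕ∞) (Y : ℕ → ℕ∞ → ℕ∞ → Ω → ℝ)
    (T : ℕ) {K : ℕ} (X : Ω → Fin K → ℝ) : Prop :=
  ∀ g1 g2 : ℕ∞, InCohort T g1 → InCohort T g2 →
    0 < μ {ω | G1 ω = g1 ∧ G2 ω = g2} →
    ∀ t : ℕ, 1 ≤ t → (t : ℕ∞) < max g1 g2 →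
      ((t : ℕ∞) < min g1 g2 →
        (μ[|{ω | G1 ω = g1 ∧ G2 ω = g2}])[Y t g1 g2 | mX X]
          =ᵐ[μ[|{ω | G1 ω = g1 ∧ G2 ω = g2}]]
        (μ[|{ω | G1 ω = g1 ∧ G2 ω = g2}])[Y t 0 0 | mX X]) ∧
      (g1 ≤ (t : ℕ∞) ∧ (t : ℕ∞) < g2 →
        (μ[|{ω | G1 ω = g1 ∧ G2 ω = g2}])[Y t g1 g2 | mX X]
          =ᵐ[μ[|{ω | G1 ω = g1 ∧ G2 ω = g2}]]
        (μ[|{ω | G1 ω = g1 ∧ G2 ω = g2}])[Y t g1 0 | mX X]) ∧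
      (g2 ≤ (t : ℕ∞) ∧ (t : ℕ∞) < g1 →
        (μ[|{ω | G1 ω = g1 ∧ G2 ω = g2}])[Y t g1 g2 | mX X]
          =ᵐ[μ[|{ω | G1 ω = g1 ∧ G2 ω = g2}]]
        (μ[|{ω | G1 ω = g1 ∧ G2 ω = g2}])[Y t 0 g2 | mX X])

/-- Conditional parallel trends with respect to the never-treated: a common measurable
function of the covariates is a version of both conditional mean untreated trends. -/
def CondPTNever (μ : Measure Ω) (G1 G2 : Ω → ℕ∞) (Y : ℕ → ℕ∞ → ℕ∞ → Ω → ℝ)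
    (T : ℕ) {K : ℕ} (X : Ω → Fin K → ℝ) : Prop :=
  ∀ g1 g2 : ℕ∞, InCohort T g1 → InCohort T g2 → ¬(g1 = ⊤ ∧ g2 = ⊤) →
    0 < μ {ω | G1 ω = g1 ∧ G2 ω = g2} →
    0 < μ {ω | G1 ω = ⊤ ∧ G2 ω = ⊤} →
    ∀ t : ℕ, min g1 g2 ≤ (t : ℕ∞) → t ≤ T →
      ∃ h : (Fin K → ℝ) → ℝ, Measurable h ∧
        (fun ω => h (X ω))
          =ᵐ[μ[|{ω | G1 ω = g1 ∧ G2 ω = g2}]]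
          (μ[|{ω | G1 ω = g1 ∧ G2 ω = g2}])[fun ω => Y t 0 0 ω - Y (t - 1) 0 0 ω | mX X] ∧
        (fun ω => h (X ω))
          =ᵐ[μ[|{ω | G1 ω = ⊤ ∧ G2 ω = ⊤}]]
          (μ[|{ω | G1 ω = ⊤ ∧ G2 ω = ⊤}])[fun ω => Y t 0 0 ω - Y (t - 1) 0 0 ω | mX X]

/-- Conditional parallel trends with respect to the not-yet-treated. -/
def CondPTNyt (μ : Measure Ω) (G1 G2 : Ω → ℕ∞) (Y : ℕ → ℕ∞ → ℕ∞ → Ω → ℝ)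
    (T : ℕ) {K : ℕ} (X : Ω → Fin K → ℝ) : Prop :=
  ∀ g1 g2 : ℕ∞, InCohort T g1 → InCohort T g2 → ¬(g1 = ⊤ ∧ g2 = ⊤) →
    0 < μ {ω | G1 ω = g1 ∧ G2 ω = g2} →
    ∀ s t : ℕ, min g1 g2 ≤ (t : ℕ∞) → t ≤ s → s ≤ T →
      0 < μ {ω | ¬ G1 ω ≤ (s : ℕ∞) ∧ ¬ G2 ω ≤ (s : ℕ∞) ∧ G1 ω ≠ g1 ∧ G2 ω ≠ g2} →
      ∃ h : (Fin K → ℝ) → ℝ, Measurable h ∧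
        (fun ω => h (X ω))
          =ᵐ[μ[|{ω | G1 ω = g1 ∧ G2 ω = g2}]]
          (μ[|{ω | G1 ω = g1 ∧ G2 ω = g2}])[fun ω => Y t 0 0 ω - Y (t - 1) 0 0 ω | mX X] ∧
        (fun ω => h (X ω))
          =ᵐ[μ[|{ω | ¬ G1 ω ≤ (s : ℕ∞) ∧ ¬ G2 ω ≤ (s : ℕ∞) ∧ G1 ω ≠ g1 ∧ G2 ω ≠ g2}]]
          (μ[|{ω | ¬ G1 ω ≤ (s : ℕ∞) ∧ ¬ G2 ω ≤ (s : ℕ∞) ∧ G1 ω ≠ g1 ∧ G2 ω ≠ g2}])[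
            fun ω => Y t 0 0 ω - Y (t - 1) 0 0 ω | mX X]


/-- The event `{W = 1} = {G ≠ g} ∪ {G¹=g¹, G²=g²}` selecting the cohort of interest. -/
def Wset (G1 G2 : Ω → ℕ∞) (g1 g2 : ℕ∞) (g : ℕ) : Set Ω :=
  {ω | min (G1 ω) (G2 ω) ≠ (g : ℕ∞) ∨ (G1 ω = g1 ∧ G2 ω = g2)}

/-- Two-event propensity-score conditioning event
`A = {G¹=g¹, G²=g²} ∪ ({D_t=0} ∩ {G¹=g¹, G²=g²}ᶜ)`. -/
def evA (G1 G2 : Ω → ℕ∞) (g1 g2 : ℕ∞) (t : ℕ) : Set Ω :=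
  {ω | (G1 ω = g1 ∧ G2 ω = g2) ∨
    (¬ min (G1 ω) (G2 ω) ≤ (t : ℕ∞) ∧ ¬(G1 ω = g1 ∧ G2 ω = g2))}

/-- Combined-event propensity-score conditioning event
`A^CS = {G=g} ∪ ({D_t=0} ∩ {G≠g})`. -/
def evACS (G1 G2 : Ω → ℕ∞) (g : ℕ) (t : ℕ) : Set Ω :=
  {ω | min (G1 ω) (G2 ω) = (g : ℕ∞) ∨
    (¬ min (G1 ω) (G2 ω) ≤ (t : ℕ∞) ∧ min (G1 ω) (G2 ω) ≠ (g : ℕ∞))}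

/-- The comparison-group event `{D_t = 0} ∩ {(G¹,G²) ≠ (g¹,g²)}` for the two events. -/
def evComp (G1 G2 : Ω → ℕ∞) (g1 g2 : ℕ∞) (t : ℕ) : Set Ω :=
  {ω | ¬ min (G1 ω) (G2 ω) ≤ (t : ℕ∞) ∧ ¬(G1 ω = g1 ∧ G2 ω = g2)}

/-- The comparison-group event `{D_t = 0} ∩ {G ≠ g}` for the combined event. -/
def evCompCS (G1 G2 : Ω → ℕ∞) (g : ℕ) (t : ℕ) : Set Ω :=
  {ω | ¬ min (G1 ω) (G2 ω) ≤ (t : ℕ∞) ∧ min (G1 ω) (G2 ω) ≠ (g : ℕ∞)}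

/-- Inverse-probability weight `h(X)·1_C / (1 − h(X))` built from a propensity score
`h ∘ X` and a comparison event `C`. -/
def ipw {K : ℕ} (X : Ω → Fin K → ℝ) (h : (Fin K → ℝ) → ℝ) (C : Set Ω) : Ω → ℝ :=
  fun ω => h (X ω) * C.indicator (fun _ => (1 : ℝ)) ω / (1 - h (X ω))

end TwoEventDiD

open TwoEventDiD

section AuxLemmas

variable {Ω : Type*} [MeasurableSpace Ω] {μ : Measure Ω}

lemma aux_measurableSet_pair {G1 G2 : Ω → ℕ∞}
    (hmG1 : ∀ g : ℕ∞, MeasurableSet {ω | G1 ω = g})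
    (hmG2 : ∀ g : ℕ∞, MeasurableSet {ω | G2 ω = g})
    (p : ℕ∞ → ℕ∞ → Prop) : MeasurableSet {ω | p (G1 ω) (G2 ω)} := by
  have h : {ω | p (G1 ω) (G2 ω)}
      = ⋃ (a : ℕ∞) (b : ℕ∞) (_ : p a b), ({ω | G1 ω = a} ∩ {ω | G2 ω = b}) := by
    ext ω
    simp only [Set.mem_setOf_eq, Set.mem_iUnion, Set.mem_inter_iff]
    exact ⟨fun h => ⟨G1 ω, G2 ω, h, rfl, rfl⟩,
      fun ⟨a, b, hab, h1, h2⟩ => by rw [h1, h2]; exact hab⟩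
  rw [h]
  exact MeasurableSet.iUnion fun a => MeasurableSet.iUnion fun b =>
    MeasurableSet.iUnion fun _ => (hmG1 a).inter (hmG2 b)

lemma aux_null_of_cond_ae [IsFiniteMeasure μ] {s : Set Ω} (hs : MeasurableSet s)
    {p : Ω → Prop} (h : ∀ᵐ ω ∂(μ[|s]), p ω) : μ ({ω | ¬ p ω} ∩ s) = 0 := by
  rw [ae_iff] at h
  rw [ProbabilityTheory.cond_apply hs] at h
  have hne : (μ s)⁻¹ ≠ 0 := ENNReal.inv_ne_zero.mpr (measure_ne_top μ s)
  rw [Set.inter_comm]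
  exact (mul_eq_zero.mp h).resolve_left hne

lemma aux_cond_ae_of_null {s : Set Ω} (hs : MeasurableSet s) {p : Ω → Prop}
    (h : μ ({ω | ¬ p ω} ∩ s) = 0) : ∀ᵐ ω ∂(μ[|s]), p ω := by
  rw [ae_iff, ProbabilityTheory.cond_apply hs, Set.inter_comm, h, mul_zero]

end AuxLemmas

/-- Lemma 2, doubly-robust moment equivalence: the two-event
doubly-robust moment equals the combined-event one under `P(·|W=1)`. -/
theorem dr_moment_equivalence
    {Ω : Type*} [MeasurableSpace Ω] (μ : Measure Ω) [IsProbabilityMeasure μ]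
    (T : ℕ) (hT : 2 ≤ T)
    (G1 G2 : Ω → ℕ∞) (Y : ℕ → ℕ∞ → ℕ∞ → Ω → ℝ)
    (hG1mem : ∀ ω, InCohort T (G1 ω)) (hG2mem : ∀ ω, InCohort T (G2 ω))
    (hmG1 : ∀ g : ℕ∞, MeasurableSet {ω | G1 ω = g})
    (hmG2 : ∀ g : ℕ∞, MeasurableSet {ω | G2 ω = g})
    (hYint : ∀ (t : ℕ) (g1 g2 : ℕ∞), Integrable (Y t g1 g2) μ)
    (hYtop1 : ∀ (t : ℕ) (g2 : ℕ∞), Y t ⊤ g2 = Y t 0 g2)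
    (hYtop2 : ∀ (t : ℕ) (g1 : ℕ∞), Y t g1 ⊤ = Y t g1 0)
    {K : ℕ} (X : Ω → Fin K → ℝ) (hX : Measurable X)
    (g1 g2 : ℕ∞) (hg1 : InCohort T g1) (hg2 : InCohort T g2)
    (g : ℕ) (hg : (g : ℕ∞) = min g1 g2)
    (t : ℕ) (hgt : g ≤ t) (htT : t ≤ T)
    (hW : 0 < μ (Wset G1 G2 g1 g2 g))
    (hYrt : Integrable (Yr G1 G2 Y t) μ)
    (hYrb : Integrable (Yr G1 G2 Y (g - 1)) μ)
    (hcoh : 0 < μ {ω | G1 ω = g1 ∧ G2 ω = g2})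
    (hctrl : 0 < μ (evComp G1 G2 g1 g2 t))
    -- chosen versions of the two propensity scores
    (hp hpCS : (Fin K → ℝ) → ℝ) (hpm : Measurable hp) (hpCSm : Measurable hpCS)
    (hpver : (fun ω => hp (X ω))
      =ᵐ[μ[|evA G1 G2 g1 g2 t]]
      (μ[|evA G1 G2 g1 g2 t])[
        Set.indicator {ω | G1 ω = g1 ∧ G2 ω = g2} (fun _ => (1 : ℝ)) | mX X])
    (hpCSver : (fun ω => hpCS (X ω))
      =ᵐ[(μ[|Wset G1 G2 g1 g2 g])[|evACS G1 G2 g t]]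
      ((μ[|Wset G1 G2 g1 g2 g])[|evACS G1 G2 g t])[
        Set.indicator {ω | min (G1 ω) (G2 ω) = (g : ℕ∞)} (fun _ => (1 : ℝ)) | mX X])
    -- `p(X) < 1` and `p^CS(X) < 1` almost surely
    (hlt : ∀ᵐ ω ∂μ, hp (X ω) < 1) (hltCS : ∀ᵐ ω ∂μ, hpCS (X ω) < 1)
    -- `E[w] > 0` and `E_{P_W}[w^CS] > 0`
    (hEw : 0 < ∫ ω, ipw X hp (evComp G1 G2 g1 g2 t) ω ∂μ)
    (hEwCS : 0 < ∫ ω, ipw X hpCS (evCompCS G1 G2 g t) ω ∂(μ[|Wset G1 G2 g1 g2 g]))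
    -- chosen versions of the two outcome control functions
    (hm hmCS : (Fin K → ℝ) → ℝ) (hmm : Measurable hm) (hmCSm : Measurable hmCS)
    (hmver : (fun ω => hm (X ω))
      =ᵐ[μ[|evComp G1 G2 g1 g2 t]]
      (μ[|evComp G1 G2 g1 g2 t])[
        fun ω => Yr G1 G2 Y t ω - Yr G1 G2 Y (g - 1) ω | mX X])
    (hmCSver : (fun ω => hmCS (X ω))
      =ᵐ[(μ[|Wset G1 G2 g1 g2 g])[|evCompCS G1 G2 g t]]
      ((μ[|Wset G1 G2 g1 g2 g])[|evCompCS G1 G2 g t])[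
        fun ω => Yr G1 G2 Y t ω - Yr G1 G2 Y (g - 1) ω | mX X])
    :
    ∫ ω, (Set.indicator {ω' | G1 ω' = g1 ∧ G2 ω' = g2} (fun _ => (1 : ℝ)) ω
            / (∫ ω', Set.indicator {ω'' | G1 ω'' = g1 ∧ G2 ω'' = g2} (fun _ => (1 : ℝ)) ω' ∂μ)
          - ipw X hp (evComp G1 G2 g1 g2 t) ω
            / (∫ ω', ipw X hp (evComp G1 G2 g1 g2 t) ω' ∂μ))
        * (Yr G1 G2 Y t ω - Yr G1 G2 Y (g - 1) ω - hm (X ω)) ∂μ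
    = ∫ ω, (Set.indicator {ω' | min (G1 ω') (G2 ω') = (g : ℕ∞)} (fun _ => (1 : ℝ)) ω
            / (∫ ω', Set.indicator {ω'' | min (G1 ω'') (G2 ω'') = (g : ℕ∞)} (fun _ => (1 : ℝ)) ω'
                ∂(μ[|Wset G1 G2 g1 g2 g]))
          - ipw X hpCS (evCompCS G1 G2 g t) ω
            / (∫ ω', ipw X hpCS (evCompCS G1 G2 g t) ω' ∂(μ[|Wset G1 G2 g1 g2 g])))
        * (Yr G1 G2 Y t ω - Yr G1 G2 Y (g - 1) ω - hmCS (X ω)) ∂(μ[|Wset G1 G2 g1 g2 g]) := by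
    classical
  -- abbreviations
  set A : Set Ω := {ω | G1 ω = g1 ∧ G2 ω = g2} with hAdef
  set Mg : Set Ω := {ω | min (G1 ω) (G2 ω) = (g : ℕ∞)} with hMgdef
  -- measurability of all relevant events
  have hmA : MeasurableSet A :=
    aux_measurableSet_pair hmG1 hmG2 (fun a b => a = g1 ∧ b = g2)
  have hmC : MeasurableSet (evComp G1 G2 g1 g2 t) :=
    aux_measurableSet_pair hmG1 hmG2
      (fun a b => ¬ min a b ≤ (t : ℕ∞) ∧ ¬(a = g1 ∧ b = g2))
  have hmCCS : MeasurableSet (evCompCS G1 G2 g t) :=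
    aux_measurableSet_pair hmG1 hmG2
      (fun a b => ¬ min a b ≤ (t : ℕ∞) ∧ min a b ≠ (g : ℕ∞))
  have hmS : MeasurableSet (Wset G1 G2 g1 g2 g) :=
    aux_measurableSet_pair hmG1 hmG2
      (fun a b => min a b ≠ (g : ℕ∞) ∨ (a = g1 ∧ b = g2))
  have hmEA : MeasurableSet (evA G1 G2 g1 g2 t) :=
    aux_measurableSet_pair hmG1 hmG2
      (fun a b => (a = g1 ∧ b = g2) ∨ (¬ min a b ≤ (t : ℕ∞) ∧ ¬(a = g1 ∧ b = g2)))
  have hmEACS : MeasurableSet (evACS G1 G2 g t) :=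
    aux_measurableSet_pair hmG1 hmG2
      (fun a b => min a b = (g : ℕ∞) ∨ (¬ min a b ≤ (t : ℕ∞) ∧ min a b ≠ (g : ℕ∞)))
  have hmMg : MeasurableSet Mg :=
    aux_measurableSet_pair hmG1 hmG2 (fun a b => min a b = (g : ℕ∞))
  -- basic order fact
  have hgle : (g : ℕ∞) ≤ (t : ℕ∞) := by exact_mod_cast hgt
  -- elementary set facts
  have hminA : ∀ ω, ω ∈ A → min (G1 ω) (G2 ω) = (g : ℕ∞) := by
    rintro ω ⟨h1, h2⟩; rw [h1, h2, ← hg]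
  have hminA' : ∀ ω, ω ∈ A → ω ∈ Mg := fun ω h => hminA ω h
  have hCmem : ∀ ω, ω ∈ evComp G1 G2 g1 g2 t ↔ ¬ min (G1 ω) (G2 ω) ≤ (t : ℕ∞) := by
    intro ω
    constructor
    · exact fun h => h.1
    · exact fun h => ⟨h, fun hp => h (le_trans (le_of_eq (hminA ω hp)) hgle)⟩
  have hCCSmem : ∀ ω, ω ∈ evCompCS G1 G2 g t ↔ ¬ min (G1 ω) (G2 ω) ≤ (t : ℕ∞) := by
    intro ω
    constructor
    · exact fun h => h.1
    · exact fun h => ⟨h, fun he => h (le_trans (le_of_eq he) hgle)⟩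
  have hCeq : evComp G1 G2 g1 g2 t = evCompCS G1 G2 g t :=
    Set.ext fun ω => (hCmem ω).trans (hCCSmem ω).symm
  have hAS : A ⊆ Wset G1 G2 g1 g2 g := fun ω h => Or.inr h
  have hCSsub : evComp G1 G2 g1 g2 t ⊆ Wset G1 G2 g1 g2 g := fun ω h =>
    Or.inl (fun he => ((hCmem ω).mp h) (le_trans (le_of_eq he) hgle))
  have hAEA : A ⊆ evA G1 G2 g1 g2 t := fun ω h => Or.inl h
  have hCEA : evComp G1 G2 g1 g2 t ⊆ evA G1 G2 g1 g2 t := fun ω h => Or.inr h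
  have hEAdecomp : evA G1 G2 g1 g2 t = A ∪ evComp G1 G2 g1 g2 t := rfl
  have hEAS : evA G1 G2 g1 g2 t ⊆ Wset G1 G2 g1 g2 g := by
    rw [hEAdecomp]; exact Set.union_subset hAS hCSsub
  have hSMg : Wset G1 G2 g1 g2 g ∩ Mg = A := by
    ext ω
    constructor
    · rintro ⟨hs, hmin⟩
      exact hs.elim (fun hne => absurd hmin hne) id
    · exact fun h => ⟨Or.inr h, hminA ω h⟩
  have hSEACS : Wset G1 G2 g1 g2 g ∩ evACS G1 G2 g t = evA G1 G2 g1 g2 t := by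
    ext ω
    constructor
    · rintro ⟨hs, hacs⟩
      rcases hacs with hmin | hcs
      · exact Or.inl (hs.elim (fun hne => absurd hmin hne) id)
      · exact Or.inr (hCeq ▸ hcs : ω ∈ evComp G1 G2 g1 g2 t)
    · intro h
      rcases h with hA | hC
      · exact ⟨Or.inr hA, Or.inl (hminA ω hA)⟩
      · exact ⟨hCSsub hC, Or.inr ((hCeq ▸ hC : ω ∈ evCompCS G1 G2 g t))⟩
  have hSCCS : Wset G1 G2 g1 g2 g ∩ evCompCS G1 G2 g t = evComp G1 G2 g1 g2 t := by
    rw [← hCeq]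
    exact Set.inter_eq_self_of_subset_right hCSsub
  -- positivity / nondegeneracy
  have hμS0 : μ (Wset G1 G2 g1 g2 g) ≠ 0 := ne_of_gt hW
  have hμA0 : μ A ≠ 0 := ne_of_gt hcoh
  have hμEA0 : μ (evA G1 G2 g1 g2 t) ≠ 0 :=
    ne_of_gt (lt_of_lt_of_le hctrl (measure_mono hCEA))
  have hcS : 0 < (μ (Wset G1 G2 g1 g2 g)).toReal :=
    ENNReal.toReal_pos hμS0 (measure_ne_top μ _)
  have hcA : 0 < (μ A).toReal := ENNReal.toReal_pos hμA0 (measure_ne_top μ _)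
  have hIw0 : (∫ ω, ipw X hp (evComp G1 G2 g1 g2 t) ω ∂μ) ≠ 0 := ne_of_gt hEw
  -- the conditional measures compose
  have hmeasEq : (μ[|Wset G1 G2 g1 g2 g])[|evACS G1 G2 g t] = μ[|evA G1 G2 g1 g2 t] := by
    rw [ProbabilityTheory.cond_cond_eq_cond_inter hmS hmEACS, hSEACS]
  have hmeasEq2 : (μ[|Wset G1 G2 g1 g2 g])[|evCompCS G1 G2 g t] = μ[|evComp G1 G2 g1 g2 t] := by
    rw [ProbabilityTheory.cond_cond_eq_cond_inter hmS hmCCS, hSCCS]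
  rw [hmeasEq] at hpCSver
  rw [hmeasEq2] at hmCSver
  -- the two propensity scores agree a.e. on `evA`
  have hindae : (Set.indicator Mg (fun _ => (1 : ℝ)))
      =ᵐ[μ[|evA G1 G2 g1 g2 t]] Set.indicator A (fun _ => (1 : ℝ)) := by
    apply aux_cond_ae_of_null hmEA
    have hempty : {ω | ¬ Set.indicator Mg (fun _ => (1:ℝ)) ω = Set.indicator A (fun _ => (1:ℝ)) ω}
        ∩ evA G1 G2 g1 g2 t = ∅ := by
      ext ω
      simp only [Set.mem_inter_iff, Set.mem_setOf_eq, Set.mem_empty_iff_false, iff_false,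
        not_and]
      intro hne hEAω
      apply hne
      have hSω : ω ∈ Wset G1 G2 g1 g2 g := hEAS hEAω
      by_cases hMA : ω ∈ A
      · rw [Set.indicator_of_mem hMA, Set.indicator_of_mem (hminA' ω hMA)]
      · have hMgω : ω ∉ Mg := fun hmg => hMA (by rw [← hSMg]; exact ⟨hSω, hmg⟩)
        rw [Set.indicator_of_notMem hMA, Set.indicator_of_notMem hMgω]
    rw [hempty]
    exact measure_empty
  have hpeq : (fun ω => hp (X ω)) =ᵐ[μ[|evA G1 G2 g1 g2 t]] (fun ω => hpCS (X ω)) :=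
    hpver.trans (((condExp_congr_ae hindae).symm).trans hpCSver.symm)
  have hpnull : μ ({ω | ¬ hp (X ω) = hpCS (X ω)} ∩ evA G1 G2 g1 g2 t) = 0 :=
    aux_null_of_cond_ae hmEA hpeq
  -- the two control functions agree a.e. on `evComp`
  have hmeq : (fun ω => hm (X ω)) =ᵐ[μ[|evComp G1 G2 g1 g2 t]] (fun ω => hmCS (X ω)) :=
    hmver.trans hmCSver.symm
  have hmnull : μ ({ω | ¬ hm (X ω) = hmCS (X ω)} ∩ evComp G1 G2 g1 g2 t) = 0 :=
    aux_null_of_cond_ae hmC hmeq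
  -- the two inverse-probability weights agree a.e. (μ)
  have wEq : (fun ω => ipw X hp (evComp G1 G2 g1 g2 t) ω)
      =ᵐ[μ] (fun ω => ipw X hpCS (evCompCS G1 G2 g t) ω) := by
    have hsub : {ω | ¬ ipw X hp (evComp G1 G2 g1 g2 t) ω = ipw X hpCS (evCompCS G1 G2 g t) ω}
        ⊆ {ω | ¬ hp (X ω) = hpCS (X ω)} ∩ evA G1 G2 g1 g2 t := by
      intro ω hω
      by_cases hc : ω ∈ evComp G1 G2 g1 g2 t
      · refine ⟨fun heq => hω ?_, hCEA hc⟩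
        simp only [ipw, ← hCeq, heq]
      · exfalso
        apply hω
        have hc' : ω ∉ evCompCS G1 G2 g t := hCeq ▸ hc
        simp only [ipw, Set.indicator_of_notMem hc, Set.indicator_of_notMem hc',
          mul_zero, zero_div]
    exact ae_iff.mpr (measure_mono_null hsub hpnull)
  -- overlap argument: the two control functions also agree a.e. on `A`
  have hMset : MeasurableSet {x : Fin K → ℝ | ¬ hm x = hmCS x} :=
    (measurableSet_eq_fun hmm hmCSm).compl
  have hNmnullA : μ ((X ⁻¹' {x | ¬ hm x = hmCS x}) ∩ A) = 0 := by
    haveI : IsProbabilityMeasure (μ[|evA G1 G2 g1 g2 t]) :=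
      ProbabilityTheory.cond_isProbabilityMeasure hμEA0
    set ν := μ[|evA G1 G2 g1 g2 t] with hνdef
    set Nm := X ⁻¹' {x | ¬ hm x = hmCS x} with hNmdef
    have hle : mX X ≤ (inferInstance : MeasurableSpace Ω) := by
      rw [mX]; exact measurable_iff_comap_le.mp hX
    have hNmm : MeasurableSet[mX X] Nm := ⟨_, hMset, rfl⟩
    have hNm : MeasurableSet Nm := hle _ hNmm
    have hintA : Integrable (Set.indicator A (fun _ => (1 : ℝ))) ν :=
      (integrable_const (1 : ℝ)).indicator hmA
    have hpint : Integrable (fun ω => hp (X ω)) ν :=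
      integrable_condExp.congr hpver.symm
    -- ν Nm = ν (A ∩ Nm)
    have hνC : ν (Nm ∩ evComp G1 G2 g1 g2 t) = 0 := by
      rw [hνdef, ProbabilityTheory.cond_apply hmEA]
      have : μ (evA G1 G2 g1 g2 t ∩ (Nm ∩ evComp G1 G2 g1 g2 t)) = 0 := by
        apply measure_mono_null _ hmnull
        intro ω hω
        exact ⟨hω.2.1, hω.2.2⟩
      rw [this, mul_zero]
    have hνEAc : ν (evA G1 G2 g1 g2 t)ᶜ = 0 := by
      rw [hνdef, ProbabilityTheory.cond_apply hmEA, Set.inter_compl_self, measure_empty,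
        mul_zero]
    have hν1 : ν Nm = ν (Nm ∩ evA G1 G2 g1 g2 t) := (measure_inter_conull hνEAc).symm
    have hν2 : ν (Nm ∩ evA G1 G2 g1 g2 t) = ν (A ∩ Nm) := by
      have hdec : Nm ∩ evA G1 G2 g1 g2 t = (Nm ∩ A) ∪ (Nm ∩ evComp G1 G2 g1 g2 t) := by
        rw [hEAdecomp, Set.inter_union_distrib_left]
      rw [hdec]
      apply le_antisymm
      · calc ν ((Nm ∩ A) ∪ (Nm ∩ evComp G1 G2 g1 g2 t))
            ≤ ν (Nm ∩ A) + ν (Nm ∩ evComp G1 G2 g1 g2 t) := measure_union_le _ _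
          _ = ν (Nm ∩ A) := by rw [hνC, add_zero]
          _ = ν (A ∩ Nm) := by rw [Set.inter_comm]
      · exact le_trans (le_of_eq (by rw [Set.inter_comm])) (measure_mono Set.subset_union_left)
    have hνNm : ν Nm = ν (A ∩ Nm) := hν1.trans hν2
    -- ∫_{Nm} (1 - hp ∘ X) dν = 0
    have hkey : ∫ ω in Nm, (1 - hp (X ω)) ∂ν = 0 := by
      rw [integral_sub (integrable_const (1 : ℝ)).restrict hpint.restrict]
      have h1 : ∫ _ω in Nm, (1 : ℝ) ∂ν = (ν Nm).toReal := by
        simp [setIntegral_const, measureReal_def]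
      have h2 : ∫ ω in Nm, hp (X ω) ∂ν = (ν (A ∩ Nm)).toReal := by
        rw [integral_congr_ae (ae_restrict_of_ae hpver),
          setIntegral_condExp hle hintA hNmm, setIntegral_indicator hmA]
        simp [setIntegral_const, Set.inter_comm, measureReal_def]
      rw [h1, h2, hνNm, sub_self]
    have hposae : ∀ᵐ ω ∂ν, 0 < 1 - hp (X ω) :=
      (hlt.mono fun ω h => sub_pos.mpr h).filter_mono
        (ProbabilityTheory.cond_absolutelyContinuous.ae_le)
    have hres : ∀ᵐ ω ∂ν.restrict Nm, 0 < 1 - hp (X ω) := ae_restrict_of_ae hposae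
    have hzero : (fun ω => 1 - hp (X ω)) =ᵐ[ν.restrict Nm] 0 :=
      (integral_eq_zero_iff_of_nonneg_ae (hres.mono fun ω h => h.le)
        (((integrable_const (1 : ℝ)).sub hpint).restrict)).mp hkey
    have hfalse : ∀ᵐ _ω ∂ν.restrict Nm, False := by
      filter_upwards [hzero, hres] with ω h0 hpos
      rw [Pi.zero_apply] at h0
      exact absurd (h0 ▸ hpos) (lt_irrefl 0)
    have hνNm0 : ν Nm = 0 := by
      have := hfalse
      rw [ae_iff] at this
      simpa [Measure.restrict_apply_univ] using this
    have hμEANm : μ (evA G1 G2 g1 g2 t ∩ Nm) = 0 := by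
      rw [hνdef, ProbabilityTheory.cond_apply hmEA] at hνNm0
      have hne : (μ (evA G1 G2 g1 g2 t))⁻¹ ≠ 0 :=
        ENNReal.inv_ne_zero.mpr (measure_ne_top μ _)
      exact (mul_eq_zero.mp hνNm0).resolve_left hne
    apply measure_mono_null _ hμEANm
    intro ω hω
    exact ⟨hAEA hω.2, hω.1⟩
  -- pass from `P_W`-integrals to `μ`-integrals
  have hcondS : μ[|Wset G1 G2 g1 g2 g]
      = (μ (Wset G1 G2 g1 g2 g))⁻¹ • μ.restrict (Wset G1 G2 g1 g2 g) := rfl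
  -- constants
  have hIA : (∫ ω', Set.indicator A (fun _ => (1 : ℝ)) ω' ∂μ) = (μ A).toReal := by
    rw [integral_indicator_const (1 : ℝ) hmA, smul_eq_mul, mul_one, measureReal_def]
  have hc1 : (∫ ω', Set.indicator Mg (fun _ => (1 : ℝ)) ω' ∂(μ[|Wset G1 G2 g1 g2 g]))
      = (μ A).toReal / (μ (Wset G1 G2 g1 g2 g)).toReal := by
    rw [integral_indicator_const (1 : ℝ) hmMg, smul_eq_mul, mul_one, measureReal_def,
      ProbabilityTheory.cond_apply hmS, hSMg, ENNReal.toReal_mul, ENNReal.toReal_inv]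
    rw [inv_mul_eq_div]
  have hindS : Set.indicator (Wset G1 G2 g1 g2 g) (fun ω => ipw X hpCS (evCompCS G1 G2 g t) ω)
      = fun ω => ipw X hpCS (evCompCS G1 G2 g t) ω := by
    funext ω
    by_cases hs : ω ∈ Wset G1 G2 g1 g2 g
    · rw [Set.indicator_of_mem hs]
    · rw [Set.indicator_of_notMem hs]
      have hc' : ω ∉ evCompCS G1 G2 g t := fun hcc =>
        hs (hCSsub (hCeq ▸ hcc : ω ∈ evComp G1 G2 g1 g2 t))
      simp [ipw, Set.indicator_of_notMem hc']
  have hc2 : (∫ ω', ipw X hpCS (evCompCS G1 G2 g t) ω' ∂(μ[|Wset G1 G2 g1 g2 g]))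
      = (∫ ω, ipw X hp (evComp G1 G2 g1 g2 t) ω ∂μ) / (μ (Wset G1 G2 g1 g2 g)).toReal := by
    rw [hcondS, integral_smul_measure, ← integral_indicator hmS, hindS,
      integral_congr_ae wEq.symm, ENNReal.toReal_inv, smul_eq_mul, inv_mul_eq_div]
  rw [hIA, hc1, hc2]
  -- rewrite the RHS as a μ-integral
  rw [hcondS, integral_smul_measure, ← integral_indicator hmS]
  set cS := (μ (Wset G1 G2 g1 g2 g)).toReal with hcSdef
  set cA := (μ A).toReal with hcAdef
  set Iw := ∫ ω, ipw X hp (evComp G1 G2 g1 g2 t) ω ∂μ with hIwdef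
  have hScS : (μ (Wset G1 G2 g1 g2 g))⁻¹.toReal = cS⁻¹ := by
    rw [ENNReal.toReal_inv, hcSdef]
  rw [hScS]
  -- identify the indicated RHS integrand with `cS • g'`
  have hindf : Set.indicator (Wset G1 G2 g1 g2 g)
      (fun ω => (Set.indicator Mg (fun _ => (1 : ℝ)) ω / (cA / cS)
          - ipw X hpCS (evCompCS G1 G2 g t) ω / (Iw / cS))
        * (Yr G1 G2 Y t ω - Yr G1 G2 Y (g - 1) ω - hmCS (X ω)))
      = fun ω => cS * ((Set.indicator A (fun _ => (1 : ℝ)) ω / cA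
          - ipw X hpCS (evCompCS G1 G2 g t) ω / Iw)
        * (Yr G1 G2 Y t ω - Yr G1 G2 Y (g - 1) ω - hmCS (X ω))) := by
    funext ω
    by_cases hs : ω ∈ Wset G1 G2 g1 g2 g
    · rw [Set.indicator_of_mem hs]
      have hind : Set.indicator Mg (fun _ => (1 : ℝ)) ω = Set.indicator A (fun _ => (1 : ℝ)) ω := by
        by_cases hA : ω ∈ A
        · rw [Set.indicator_of_mem hA, Set.indicator_of_mem (hminA' ω hA)]
        · have hMgω : ω ∉ Mg := fun hmg => hA (by rw [← hSMg]; exact ⟨hs, hmg⟩)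
          rw [Set.indicator_of_notMem hA, Set.indicator_of_notMem hMgω]
      rw [hind, div_div_eq_mul_div, div_div_eq_mul_div]
      ring
    · rw [Set.indicator_of_notMem hs]
      have hA : ω ∉ A := fun h => hs (hAS h)
      have hc' : ω ∉ evCompCS G1 G2 g t := fun hcc =>
        hs (hCSsub (hCeq ▸ hcc : ω ∈ evComp G1 G2 g1 g2 t))
      simp [ipw, Set.indicator_of_notMem hA, Set.indicator_of_notMem hc']
  rw [hindf, integral_const_mul, smul_eq_mul, ← mul_assoc, inv_mul_cancel₀ (ne_of_gt hcS), one_mul]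
  -- finally, the two μ-integrands agree a.e.
  apply integral_congr_ae
  have e2 : ∀ᵐ ω ∂μ, ω ∉ ({ω | ¬ hm (X ω) = hmCS (X ω)} ∩ evComp G1 G2 g1 g2 t) :=
    measure_eq_zero_iff_ae_notMem.mp hmnull
  have e3 : ∀ᵐ ω ∂μ, ω ∉ ((X ⁻¹' {x | ¬ hm x = hmCS x}) ∩ A) :=
    measure_eq_zero_iff_ae_notMem.mp hNmnullA
  filter_upwards [wEq, e2, e3] with ω h1 h2 h3

  by_cases hNmω : hm (X ω) = hmCS (X ω)
  · rw [h1, hNmω]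
  · have hA : ω ∉ A := fun hA' => h3 ⟨hNmω, hA'⟩
    have hC : ω ∉ evComp G1 G2 g1 g2 t := fun hC' => h2 ⟨hNmω, hC'⟩
    have hC' : ω ∉ evCompCS G1 G2 g t := hCeq ▸ hC
    simp [ipw, Set.indicator_of_notMem hA, Set.indicator_of_notMem hC,
      Set.indicator_of_notMem hC']
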